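/- arXiv:1305.1849 — 3 statements merged into one kernel-verified Lean document; each statement's English description precedes it below -/
import Mathlib

section
/- For all b, c ∈ ℂ and every real z > 0, the generalized Bessel function with p = −b/2 reduces to the cosine: 𝒲_{−b/2, b, c²}(z) = (z/2)^{−b/2} · cos(cz)/√π. -/
open MeasureTheory

/-- Pochhammer symbol `(a)_k = a (a+1) ⋯ (a+k-1)`. -/
noncomputable def poch (a : ℂ) (k : ℕ) : ℂ := ∏ i ∈ Finset.range k, (a + i)

/-- The third Appell function `F₃`. -/
noncomputable def appellF3 (a a' b b' g x y : ℂ) : ℂ :=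
  ∑' m : ℕ, ∑' n : ℕ,
    (poch a m * poch a' n * poch b m * poch b' n) /
      (poch g (m + n) * (Nat.factorial m : ℂ) * (Nat.factorial n : ℂ)) * x ^ m * y ^ n

/-- Left-sided Marichev–Saigo–Maeda fractional integral. -/
noncomputable def msmLeft (a a' b b' g : ℂ) (f : ℝ → ℂ) (x : ℝ) : ℂ :=
  ((x : ℂ) ^ (-a) / Complex.Gamma g) *
    ∫ t in Set.Ioo (0 : ℝ) x,
      ((x - t : ℝ) : ℂ) ^ (g - 1) * (t : ℂ) ^ (-a') *
        appellF3 a a' b b' g (1 - (t : ℂ) / (x : ℂ)) (1 - (x : ℂ) / (t : ℂ)) * f t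

/-- Right-sided Marichev–Saigo–Maeda fractional integral. -/
noncomputable def msmRight (a a' b b' g : ℂ) (f : ℝ → ℂ) (x : ℝ) : ℂ :=
  ((x : ℂ) ^ (-a') / Complex.Gamma g) *
    ∫ t in Set.Ioi x,
      ((t - x : ℝ) : ℂ) ^ (g - 1) * (t : ℂ) ^ (-a) *
        appellF3 a a' b b' g (1 - (x : ℂ) / (t : ℂ)) (1 - (t : ℂ) / (x : ℂ)) * f t

/-- Generalized Bessel function of the first kind `𝒲_{p,b,c}`. -/
noncomputable def genBessel (p b c : ℂ) (z : ℂ) : ℂ :=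
  ∑' k : ℕ, ((-1) ^ k * c ^ k) /
    (Complex.Gamma (p + (b + 1) / 2 + k) * (Nat.factorial k : ℂ)) *
      (z / 2) ^ (2 * (k : ℂ) + p)

/-- Generalized Wright function `ₚψ_q`. -/
noncomputable def wright (a b : List (ℂ × ℂ)) (z : ℂ) : ℂ :=
  ∑' k : ℕ,
    ((a.map fun q => Complex.Gamma (q.1 + q.2 * k)).prod /
      (b.map fun q => Complex.Gamma (q.1 + q.2 * k)).prod) * z ^ k / (Nat.factorial k : ℂ)

/-- Generalized hypergeometric function `ₚF_q`. -/
noncomputable def genHyper (a c : List ℂ) (z : ℂ) : ℂ :=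
  ∑' k : ℕ, ((a.map fun q => poch q k).prod / (c.map fun q => poch q k).prod) *
    z ^ k / (Nat.factorial k : ℂ)




lemma sqrt_pi_c : (Real.sqrt Real.pi : ℂ) = Complex.Gamma (1/2) := by
  rw [Complex.Gamma_one_half_eq, Real.sqrt_eq_rpow, Complex.ofReal_cpow Real.pi_pos.le]
  norm_num

lemma gamma_half (k : ℕ) : Complex.Gamma (1/2 + k) =
    (Real.sqrt Real.pi : ℂ) * (Nat.factorial (2*k)) / (4^k * Nat.factorial k) := by
  induction k with
  | zero => simp [sqrt_pi_c]
  | succ k ih =>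
      have hne : (1/2 + (k:ℂ)) ≠ 0 := by
        intro h
        have : (k:ℂ) = -(1/2) := by linear_combination h
        have := congrArg Complex.re this
        simp at this
        nlinarith [Nat.cast_nonneg (α := ℝ) k]
      have h : (1/2 + ((k+1 : ℕ) : ℂ)) = (1/2 + (k:ℂ)) + 1 := by push_cast; ring
      rw [h, Complex.Gamma_add_one _ hne, ih]
      have h4 : (4:ℂ)^k ≠ 0 := by norm_num
      have hf : ((Nat.factorial k : ℂ)) ≠ 0 := by exact_mod_cast Nat.factorial_ne_zero k
      have hf2 : ((Nat.factorial (k+1) : ℂ)) ≠ 0 := by exact_mod_cast Nat.factorial_ne_zero (k+1)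
      field_simp
      rw [show 2*(k+1) = (2*k+1)+1 by ring, Nat.factorial_succ, Nat.factorial_succ, Nat.factorial_succ]
      push_cast
      ring


theorem stmt6 (b c : ℂ) (z : ℝ) (hz : 0 < z) :
    genBessel (-b / 2) b (c ^ 2) (z : ℂ) =
      ((z : ℂ) / 2) ^ (-b / 2) * Complex.cos (c * z) / (Real.sqrt Real.pi : ℂ) := by
  have hz0 : ((z:ℂ)/2) ≠ 0 := by
    simp only [ne_eq, div_eq_zero_iff]
    push_neg
    exact ⟨by exact_mod_cast hz.ne', by norm_num⟩
  have hsp : (Real.sqrt Real.pi : ℂ) ≠ 0 := by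
    exact_mod_cast (Real.sqrt_pos.2 Real.pi_pos).ne'
  unfold genBessel
  have hkey : ∀ k : ℕ,
      ((-1) ^ k * (c^2) ^ k) /
        (Complex.Gamma (-b/2 + (b + 1) / 2 + k) * (Nat.factorial k : ℂ)) *
          ((z:ℂ) / 2) ^ (2 * (k : ℂ) + (-b/2))
      = ((-1) ^ k * (c * z) ^ (2*k) / (Nat.factorial (2*k) : ℂ)) *
          (((z:ℂ)/2) ^ (-b/2) / (Real.sqrt Real.pi : ℂ)) := by
    intro k
    have hg : -b/2 + (b + 1) / 2 + (k:ℂ) = 1/2 + k := by ring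
    rw [hg, gamma_half]
    have hcp : ((z:ℂ)/2) ^ (2 * (k : ℂ) + (-b/2)) =
        ((z:ℂ)/2) ^ (2*k) * ((z:ℂ)/2) ^ (-b/2) := by
      rw [Complex.cpow_add _ _ hz0, show (2 * (k:ℂ)) = ((2*k : ℕ) : ℂ) by push_cast; ring,
        Complex.cpow_natCast]
    rw [hcp]
    have h4 : (4:ℂ)^k ≠ 0 := by norm_num
    have hf : ((Nat.factorial k : ℂ)) ≠ 0 := by exact_mod_cast Nat.factorial_ne_zero k
    have hf2 : ((Nat.factorial (2*k) : ℂ)) ≠ 0 := by exact_mod_cast Nat.factorial_ne_zero (2*k)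
    rw [show (4:ℂ)^k = 2^(2*k) by rw [pow_mul]; norm_num]
    field_simp
    ring_nf
    have h2 : ((1:ℂ)/2)^(k*2) * 2^(k*2) = 1 := by rw [← mul_pow]; norm_num
    rw [mul_assoc _ (((1:ℂ)/2)^(k*2)), h2, mul_one]
  simp_rw [hkey]
  rw [tsum_mul_right, ← Complex.cos_eq_tsum]
  field_simp
end

section
/- For all b ∈ ℂ, all c ∈ ℂ with c ≠ 0, and every real z > 0, the generalized Bessel function with p = 1 − b/2 reduces to the sine: 𝒲_{1−b/2, b, c²}(z) = (z/2)^{−b/2} · sin(cz)/(c√π). -/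
open MeasureTheory

lemma sqrtpi_cast : ((Real.sqrt Real.pi : ℝ) : ℂ) = (Real.pi : ℂ) ^ (1/2 : ℂ) := by
  rw [Real.sqrt_eq_rpow, Complex.ofReal_cpow Real.pi_pos.le]
  norm_num

lemma gamma32_ne (n : ℕ) : (3/2 : ℂ) + n ≠ 0 := by
  have : ((3/2 + n : ℝ) : ℂ) ≠ 0 := by
    rw [Complex.ofReal_ne_zero]; positivity
  push_cast at this ⊢
  convert this using 1

lemma gammaK (k : ℕ) : Complex.Gamma ((3/2 : ℂ) + k) =
    ((2*k+1).factorial : ℂ) * (Real.sqrt Real.pi : ℂ) / (2 * 4^k * (k.factorial : ℂ)) := by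
  induction k with
  | zero =>
      simp only [Nat.cast_zero, add_zero, pow_zero, Nat.factorial]
      have h : (3/2 : ℂ) = 1/2 + 1 := by ring
      rw [h, Complex.Gamma_add_one _ (by norm_num), Complex.Gamma_one_half_eq, ← sqrtpi_cast]
      push_cast
      ring
  | succ n ih =>
      have h1 : (3/2 : ℂ) + ((n+1 : ℕ) : ℂ) = ((3/2 : ℂ) + n) + 1 := by push_cast; ring
      rw [h1, Complex.Gamma_add_one _ (gamma32_ne n), ih]
      have h2 : ((2*(n+1)+1).factorial : ℂ) = (2*(n:ℂ)+3) * (2*n+2) * ((2*n+1).factorial : ℂ) := by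
        have he : 2*(n+1)+1 = (2*n+2)+1 := by ring
        rw [he, Nat.factorial_succ, show 2*n+2 = (2*n+1)+1 from rfl, Nat.factorial_succ]
        push_cast; ring
      have h3 : ((n+1).factorial : ℂ) = ((n:ℂ)+1) * (n.factorial : ℂ) := by
        rw [Nat.factorial_succ]; push_cast; ring
      rw [h2, h3]
      have hn4 : (4:ℂ)^n ≠ 0 := pow_ne_zero _ (by norm_num)
      have hnf : ((n.factorial : ℂ)) ≠ 0 := Nat.cast_ne_zero.mpr n.factorial_ne_zero
      have hn1 : ((n:ℂ)+1) ≠ 0 := Nat.cast_add_one_ne_zero n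
      field_simp
      ring

theorem stmt8 (b c : ℂ) (hc : c ≠ 0) (z : ℝ) (hz : 0 < z) :
    genBessel (1 - b / 2) b (c ^ 2) (z : ℂ) =
      ((z : ℂ) / 2) ^ (-b / 2) * Complex.sin (c * z) / (c * (Real.sqrt Real.pi : ℂ)) := by
  have hsπ : ((Real.sqrt Real.pi : ℝ) : ℂ) ≠ 0 := by
    rw [Complex.ofReal_ne_zero]
    exact (Real.sqrt_pos.mpr Real.pi_pos).ne'
  have hz2 : ((z : ℂ) / 2) ≠ 0 := by
    apply div_ne_zero _ (by norm_num)
    exact_mod_cast hz.ne'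
  have key : ∀ k : ℕ,
      ((-1) ^ k * (c ^ 2) ^ k) /
        (Complex.Gamma ((1 - b / 2) + (b + 1) / 2 + k) * (Nat.factorial k : ℂ)) *
          ((z : ℂ) / 2) ^ (2 * (k : ℂ) + (1 - b / 2)) =
      ((z : ℂ) / 2) ^ (-b / 2) / (c * (Real.sqrt Real.pi : ℂ)) *
        ((-1) ^ k * (c * z) ^ (2 * k + 1) / ((2 * k + 1).factorial : ℂ)) := by
    intro k
    have hΓarg : (1 - b / 2) + (b + 1) / 2 + (k : ℂ) = (3/2 : ℂ) + k := by ring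
    have hpow : ((z : ℂ) / 2) ^ (2 * (k : ℂ) + (1 - b / 2)) =
        ((z : ℂ) / 2) ^ (2 * k + 1) * ((z : ℂ) / 2) ^ (-b / 2) := by
      have h1 : 2 * (k : ℂ) + (1 - b / 2) = ((2 * k + 1 : ℕ) : ℂ) + (-b / 2) := by
        push_cast; ring
      rw [h1, Complex.cpow_add _ _ hz2, Complex.cpow_natCast]
    rw [hΓarg, gammaK, hpow]
    have hkf : ((k.factorial : ℂ)) ≠ 0 := Nat.cast_ne_zero.mpr k.factorial_ne_zero
    have h2kf : (((2*k+1).factorial : ℂ)) ≠ 0 := Nat.cast_ne_zero.mpr (2*k+1).factorial_ne_zero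
    have hk4 : (4:ℂ)^k ≠ 0 := pow_ne_zero _ (by norm_num)
    have hc2 : (c * z)^(2*k+1) = c^(2*k+1) * (z:ℂ)^(2*k+1) := mul_pow _ _ _
    have hcc : c ^ (2*k+1) = (c^2)^k * c := by rw [← pow_mul]; ring
    have hzz : ((z:ℂ)/2) ^ (2*k+1) = (z:ℂ)^(2*k+1) / (2 * 4^k) := by
      rw [div_pow]
      congr 1
      rw [show (2:ℂ) * 4^k = 2 * (2^2)^k by norm_num, ← pow_mul, ← pow_succ']
    rw [hc2, hcc, hzz]
    field_simp
  rw [genBessel]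
  rw [tsum_congr key]
  rw [((Complex.hasSum_sin (c * z)).mul_left
      (((z : ℂ) / 2) ^ (-b / 2) / (c * (Real.sqrt Real.pi : ℂ)))).tsum_eq]
  ring
end

section
/- For all b ∈ ℂ, all c ∈ ℂ with c ≠ 0, and every real z > 0, the generalized Bessel function with p = 1 − b/2 and parameter −c² reduces to the hyperbolic sine: 𝒲_{1−b/2, b, −c²}(z) = (z/2)^{−b/2} · sinh(cz)/(c√π). -/
open Complex Nat

lemma hasSum_sinh' (w : ℂ) :
    HasSum (fun n : ℕ => w ^ (2 * n + 1) / ((2 * n + 1)! : ℂ)) (Complex.sinh w) := by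
  have h := (Complex.hasSum_sin' (w * Complex.I)).div_const Complex.I
  rw [Complex.sin_mul_I, mul_div_cancel_right₀ _ Complex.I_ne_zero] at h
  convert h using 2 with n
  · rfl
  have h1 : w * Complex.I * Complex.I = -w := by
    rw [mul_assoc, Complex.I_mul_I, mul_neg_one]
  rw [h1, Odd.neg_pow ⟨n, by ring⟩, div_div, div_div, Complex.I_mul_I]
  ring

lemma gamma32 (k : ℕ) :
    Complex.Gamma ((k : ℂ) + 3/2) * (4 ^ k * (k)! * 2) =
      ((2 * k + 1)! : ℂ) * (Real.sqrt Real.pi : ℂ) := by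
  induction k with
  | zero =>
      have : ((0:ℕ) : ℂ) + 3/2 = 1/2 + 1 := by norm_num
      rw [this, Complex.Gamma_add_one _ (by norm_num),
        show (1/2:ℂ) = ((1/2:ℝ):ℂ) by norm_num, Complex.Gamma_ofReal,
        Real.Gamma_one_half_eq]
      simp [Nat.factorial]
      ring
  | succ k ih =>
      have harg : ((k + 1 : ℕ) : ℂ) + 3/2 = ((k : ℂ) + 3/2) + 1 := by
        push_cast
        ring
      rw [harg, Complex.Gamma_add_one]
      · have hf : ((2 * (k+1) + 1)! : ℂ) = ((2*k+3) * (2*k+2) * (2*k+1)! : ℂ) := by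
          have : 2 * (k+1) + 1 = (2*k+2) + 1 := by ring
          rw [this, Nat.factorial_succ, Nat.factorial_succ]
          push_cast
          ring
        rw [hf]
        have hfk : ((k+1)! : ℂ) = ((k:ℂ)+1) * (k)! := by
          rw [Nat.factorial_succ]; push_cast; ring
        rw [hfk]
        calc ((k : ℂ) + 3/2) * Complex.Gamma ((k : ℂ) + 3/2) *
              (4 ^ (k+1) * (((k:ℂ)+1) * (k)!) * 2)
            = (Complex.Gamma ((k : ℂ) + 3/2) * (4 ^ k * (k)! * 2)) *
              (((k:ℂ)+3/2) * 4 * ((k:ℂ)+1)) := by ring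
          _ = _ := by rw [ih]; push_cast; ring
      · have : ((k:ℂ) + 3/2) = ((k + 3/2 : ℝ) : ℂ) := by push_cast; ring
        rw [this]
        exact Complex.ofReal_ne_zero.mpr (by positivity)


open MeasureTheory

theorem stmt9 (b c : ℂ) (hc : c ≠ 0) (z : ℝ) (hz : 0 < z) :
    genBessel (1 - b / 2) b (-c ^ 2) (z : ℂ) =
      ((z : ℂ) / 2) ^ (-b / 2) * Complex.sinh (c * z) / (c * (Real.sqrt Real.pi : ℂ)) := by
  have hzC : ((z:ℂ)/2) ≠ 0 := by
    simp [Complex.ofReal_ne_zero, ne_of_gt hz]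
  have hpi : (Real.sqrt Real.pi : ℂ) ≠ 0 :=
    Complex.ofReal_ne_zero.mpr (by positivity)
  unfold genBessel
  have key : ∀ k : ℕ,
      ((-1) ^ k * (-c ^ 2) ^ k) /
        (Complex.Gamma (1 - b/2 + (b + 1) / 2 + k) * (Nat.factorial k : ℂ)) *
          ((z:ℂ) / 2) ^ (2 * (k : ℂ) + (1 - b/2)) =
      ((z : ℂ) / 2) ^ (-b / 2) / (c * (Real.sqrt Real.pi : ℂ)) *
        ((c * z) ^ (2 * k + 1) / ((2 * k + 1)! : ℂ)) := by
    intro k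
    have e1 : (1 - b/2 + (b + 1) / 2 + (k:ℂ)) = (k:ℂ) + 3/2 := by ring
    have e2 : (2 * (k : ℂ) + (1 - b/2)) = ((2 * k + 1 : ℕ) : ℂ) + (-b/2) := by
      push_cast; ring
    rw [e1, e2, Complex.cpow_add _ _ hzC, Complex.cpow_natCast]
    have hG := gamma32 k
    have hGne : Complex.Gamma ((k:ℂ) + 3/2) ≠ 0 := by
      have : ((k:ℂ) + 3/2) = ((k + 3/2 : ℝ) : ℂ) := by push_cast; ring
      rw [this, Complex.Gamma_ofReal]
      exact Complex.ofReal_ne_zero.mpr (Real.Gamma_pos_of_pos (by positivity)).ne'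
    have hfk : ((k)! : ℂ) ≠ 0 := Nat.cast_ne_zero.mpr (Nat.factorial_ne_zero k)
    have hf2k : ((2*k+1)! : ℂ) ≠ 0 := Nat.cast_ne_zero.mpr (Nat.factorial_ne_zero _)
    have hzne : (z : ℂ) ≠ 0 := Complex.ofReal_ne_zero.mpr hz.ne'
    have h4 : (4:ℂ) ^ k ≠ 0 := pow_ne_zero _ (by norm_num)
    have hG' : Complex.Gamma ((k:ℂ) + 3/2) =
        ((2 * k + 1)! : ℂ) * (Real.sqrt Real.pi : ℂ) / (4 ^ k * (k)! * 2) := by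
      field_simp at hG ⊢
      linear_combination hG
    rw [hG']
    have hneg : ((-1:ℂ)) ^ k * (-c ^ 2) ^ k = (c^2) ^ k := by
      rw [neg_pow (c^2), ← mul_assoc, ← mul_pow]
      norm_num
    rw [hneg]
    have hzz : ((z:ℂ)/2) ^ (2*k+1) * (4:ℂ)^k * 2 = (z:ℂ) ^ (2*k+1) := by
      rw [div_pow, show (4:ℂ) = 2^2 by norm_num, ← pow_mul]
      field_simp
      ring
    rw [mul_pow (c) ((z:ℂ)), ← pow_mul c 2 k,
      show (4:ℂ)^k = 2^(2*k) from by rw [show (4:ℂ)=2^2 by norm_num, ← pow_mul]]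
    field_simp
    rw [← hzz, show (4:ℂ)^k = 2^(2*k) by rw [show (4:ℂ)=2^2 by norm_num, ← pow_mul]]
    ring
  calc (∑' k : ℕ, ((-1) ^ k * (-c ^ 2) ^ k) /
        (Complex.Gamma (1 - b/2 + (b + 1) / 2 + k) * (Nat.factorial k : ℂ)) *
          ((z:ℂ) / 2) ^ (2 * (k : ℂ) + (1 - b/2)))
      = ∑' k : ℕ, ((z : ℂ) / 2) ^ (-b / 2) / (c * (Real.sqrt Real.pi : ℂ)) *
        ((c * z) ^ (2 * k + 1) / ((2 * k + 1)! : ℂ)) := tsum_congr key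
    _ = ((z : ℂ) / 2) ^ (-b / 2) / (c * (Real.sqrt Real.pi : ℂ)) *
        Complex.sinh (c * z) := by
        rw [tsum_mul_left, (hasSum_sinh' (c * z)).tsum_eq]
    _ = _ := by ring
end
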